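/- Let u₀, v₀ ∈ ℂⁿ be linearly independent with T = [u₀,v₀] having exactly one positive and one negative eigenvalue. For u, v ∈ ℂⁿ defined by u = a₁₁u₀ + a₁₂v₀ and v = a₂₁u₀ + a₂₂v₀ for a 2×2 complex matrix A = (a_{kl}), one has [u,v] = [u₀,v₀] if and only if A* K A = K, where K = [[0,1],[1,0]]. Moreover every pair (u,v) with [u,v] = [u₀,v₀] arises this way from some A with A* K A = K. -/
import Mathlib


open scoped BigOperators ComplexConjugate
open Matrix

noncomputable section

/-- Inner product on `ℂⁿ`, linear in the first argument: `⟨x,y⟩ = ∑ⱼ xⱼ conj(yⱼ)`. -/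
def cip {n : ℕ} (x y : Fin n → ℂ) : ℂ := ∑ j, x j * (starRingEnd ℂ) (y j)

/-- Squared Euclidean norm on `ℂⁿ`. -/
def cnSq {n : ℕ} (x : Fin n → ℂ) : ℝ := ∑ j, Complex.normSq (x j)

/-- The phaseless measurement map `α(x)ₖ = |⟨x,fₖ⟩|²`. -/
def alphaMap {n m : ℕ} (f : Fin m → Fin n → ℂ) (x : Fin n → ℂ) : Fin m → ℝ :=
  fun k => Complex.normSq (cip x (f k))

/-- `α` is injective up to a global phase. -/
def InjUpToPhase {n m : ℕ} (f : Fin m → Fin n → ℂ) : Prop :=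
  ∀ x y : Fin n → ℂ, alphaMap f x = alphaMap f y → ∃ c : ℂ, ‖c‖ = 1 ∧ y = c • x
/-- Number of strictly positive eigenvalues (with multiplicity) of a Hermitian matrix. -/
def posCount {n : ℕ} {𝕜 : Type*} [RCLike 𝕜] {X : Matrix (Fin n) (Fin n) 𝕜}
    (hX : X.IsHermitian) : ℕ :=
  Nat.card {i // 0 < hX.eigenvalues i}

/-- Number of strictly negative eigenvalues (with multiplicity) of a Hermitian matrix. -/
def negCount {n : ℕ} {𝕜 : Type*} [RCLike 𝕜] {X : Matrix (Fin n) (Fin n) 𝕜}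
    (hX : X.IsHermitian) : ℕ :=
  Nat.card {i // hX.eigenvalues i < 0}

/-- Nuclear norm of a Hermitian matrix: sum of absolute values of eigenvalues. -/
def nucNorm {n : ℕ} {𝕜 : Type*} [RCLike 𝕜] {X : Matrix (Fin n) (Fin n) 𝕜}
    (hX : X.IsHermitian) : ℝ :=
  ∑ i, |hX.eigenvalues i|

/-- Rank-one operator `u v*`, with entries `uᵢ conj(vⱼ)`. -/
def outer {n : ℕ} (u v : Fin n → ℂ) : Matrix (Fin n) (Fin n) ℂ :=
  Matrix.vecMulVec u (star v)

/-- Symmetric outer product `[u,v] = ½(uv* + vu*)`. -/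
def symOuter {n : ℕ} (u v : Fin n → ℂ) : Matrix (Fin n) (Fin n) ℂ :=
  (1/2 : ℂ) • (outer u v + outer v u)

section Aux
variable {n : ℕ}

lemma exists_dual (x y : Fin n → ℂ) (h : LinearIndependent ℂ ![x, y]) :
    ∃ φ ψ : (Fin n → ℂ) →ₗ[ℂ] ℂ, φ x = 1 ∧ φ y = 0 ∧ ψ x = 0 ∧ ψ y = 1 := by
  have hx : x ∈ Submodule.span ℂ (Set.range ![x, y]) :=
    Submodule.subset_span ⟨0, rfl⟩
  have hy : y ∈ Submodule.span ℂ (Set.range ![x, y]) :=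
    Submodule.subset_span ⟨1, rfl⟩
  have h0 := h.repr_eq_single 0 ⟨x, hx⟩ rfl
  have h1 := h.repr_eq_single 1 ⟨y, hy⟩ rfl
  obtain ⟨φ, hφ⟩ := LinearMap.exists_extend ((Finsupp.lapply (0 : Fin 2)).comp h.repr)
  obtain ⟨ψ, hψ⟩ := LinearMap.exists_extend ((Finsupp.lapply (1 : Fin 2)).comp h.repr)
  refine ⟨φ, ψ, ?_, ?_, ?_, ?_⟩
  · have := LinearMap.congr_fun hφ ⟨x, hx⟩
    simpa [h0] using this
  · have := LinearMap.congr_fun hφ ⟨y, hy⟩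
    simpa [h1] using this
  · have := LinearMap.congr_fun hψ ⟨x, hx⟩
    simpa [h0] using this
  · have := LinearMap.congr_fun hψ ⟨y, hy⟩
    simpa [h1] using this

lemma indep_outer {u₀ v₀ : Fin n → ℂ} (hli : LinearIndependent ℂ ![u₀, v₀])
    (p q r s : ℂ)
    (h : p • outer u₀ u₀ + q • outer u₀ v₀ + r • outer v₀ u₀ + s • outer v₀ v₀ = 0) :
    p = 0 ∧ q = 0 ∧ r = 0 ∧ s = 0 := by
  have pair := fun a b => (LinearIndependent.pair_iff.mp hli) a b
  have H : ∀ i : Fin n,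
      ((conj p * conj (u₀ i) + conj r * conj (v₀ i)) • u₀
        + (conj q * conj (u₀ i) + conj s * conj (v₀ i)) • v₀ = 0) := by
    intro i
    funext j
    have e := congrFun (congrFun h i) j
    simp only [Matrix.add_apply, Matrix.smul_apply, Matrix.zero_apply, outer,
      vecMulVec_apply, Pi.star_apply, Complex.star_def, smul_eq_mul] at e
    have e' := congrArg (starRingEnd ℂ) e
    simp only [_root_.map_add, _root_.map_mul, map_zero, Complex.conj_conj] at e'
    simp only [Pi.add_apply, Pi.smul_apply, Pi.zero_apply, smul_eq_mul]
    linear_combination e'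
  have h1 : ∀ i, conj p * conj (u₀ i) + conj r * conj (v₀ i) = 0 ∧
      conj q * conj (u₀ i) + conj s * conj (v₀ i) = 0 := fun i => pair _ _ (H i)
  have hpr : p • u₀ + r • v₀ = 0 := by
    funext i
    have e' := congrArg (starRingEnd ℂ) (h1 i).1
    simp only [_root_.map_add, _root_.map_mul, map_zero, Complex.conj_conj] at e'
    simp only [Pi.add_apply, Pi.smul_apply, Pi.zero_apply, smul_eq_mul]
    linear_combination e'
  have hqs : q • u₀ + s • v₀ = 0 := by
    funext i
    have e' := congrArg (starRingEnd ℂ) (h1 i).2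
    simp only [_root_.map_add, _root_.map_mul, map_zero, Complex.conj_conj] at e'
    simp only [Pi.add_apply, Pi.smul_apply, Pi.zero_apply, smul_eq_mul]
    linear_combination e'
  obtain ⟨hp, hr⟩ := pair _ _ hpr
  obtain ⟨hq, hs⟩ := pair _ _ hqs
  exact ⟨hp, hq, hr, hs⟩

lemma symOuter_expand (u₀ v₀ : Fin n → ℂ) (a b c d : ℂ) :
    symOuter (a • u₀ + b • v₀) (c • u₀ + d • v₀) =
      ((a * conj c + c * conj a) / 2) • outer u₀ u₀
      + ((a * conj d + c * conj b) / 2) • outer u₀ v₀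
      + ((b * conj c + d * conj a) / 2) • outer v₀ u₀
      + ((b * conj d + d * conj b) / 2) • outer v₀ v₀ := by
  funext i j
  simp only [symOuter, outer, Matrix.add_apply, Matrix.smul_apply, vecMulVec_apply,
    Pi.add_apply, Pi.smul_apply, Pi.star_apply, Complex.star_def, smul_eq_mul,
    map_add, _root_.map_mul]
  ring

lemma hK_iff (A : Matrix (Fin 2) (Fin 2) ℂ) :
    Aᴴ * !![(0 : ℂ), 1; 1, 0] * A = !![(0 : ℂ), 1; 1, 0] ↔
      (conj (A 0 0) * A 1 0 + conj (A 1 0) * A 0 0 = 0 ∧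
       conj (A 0 0) * A 1 1 + conj (A 1 0) * A 0 1 = 1 ∧
       conj (A 0 1) * A 1 0 + conj (A 1 1) * A 0 0 = 1 ∧
       conj (A 0 1) * A 1 1 + conj (A 1 1) * A 0 1 = 0) := by
  rw [← Matrix.ext_iff]
  simp only [Fin.forall_fin_two, Matrix.mul_apply, Fin.sum_univ_two,
    Matrix.conjTranspose_apply, Matrix.cons_val', Matrix.cons_val_zero, Matrix.cons_val_one,
    Matrix.head_cons, Matrix.empty_val', Matrix.cons_val_fin_one, Matrix.head_fin_const, Matrix.of_apply,
    Complex.star_def]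
  constructor
  · rintro ⟨⟨h1, h2⟩, h3, h4⟩
    refine ⟨by linear_combination h1, by linear_combination h2,
      by linear_combination h3, by linear_combination h4⟩
  · rintro ⟨h1, h2, h3, h4⟩
    refine ⟨⟨by linear_combination h1, by linear_combination h2⟩,
      by linear_combination h3, by linear_combination h4⟩

lemma part1core {u₀ v₀ : Fin n → ℂ} (hli : LinearIndependent ℂ ![u₀, v₀]) (a b c d : ℂ) :
    symOuter (a • u₀ + b • v₀) (c • u₀ + d • v₀) = symOuter u₀ v₀ ↔
      (a * conj c + c * conj a = 0 ∧ a * conj d + c * conj b = 1 ∧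
       b * conj c + d * conj a = 1 ∧ b * conj d + d * conj b = 0) := by
  constructor
  · intro h
    rw [symOuter_expand] at h
    have h2 : ((a * conj c + c * conj a) / 2) • outer u₀ u₀
        + ((a * conj d + c * conj b) / 2 - 1/2) • outer u₀ v₀
        + ((b * conj c + d * conj a) / 2 - 1/2) • outer v₀ u₀
        + ((b * conj d + d * conj b) / 2) • outer v₀ v₀ = 0 := by
      rw [show ((0 : Matrix (Fin n) (Fin n) ℂ)) =
        (((a * conj c + c * conj a) / 2) • outer u₀ u₀
        + ((a * conj d + c * conj b) / 2) • outer u₀ v₀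
        + ((b * conj c + d * conj a) / 2) • outer v₀ u₀
        + ((b * conj d + d * conj b) / 2) • outer v₀ v₀) - symOuter u₀ v₀ by rw [h, sub_self]]
      simp only [symOuter]
      module
    obtain ⟨e1, e2, e3, e4⟩ := indep_outer hli _ _ _ _ h2
    refine ⟨?_, ?_, ?_, ?_⟩
    · field_simp at e1; linear_combination e1
    · field_simp at e2; linear_combination e2
    · field_simp at e3; linear_combination e3
    · field_simp at e4; linear_combination e4
  · rintro ⟨e1, e2, e3, e4⟩
    rw [symOuter_expand, e1, e2, e3, e4]
    simp only [symOuter]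
    module

end Aux

/-- Let `u₀, v₀` be linearly independent with `T = [u₀,v₀]` having exactly
one positive and one negative eigenvalue. For `u = a₁₁u₀ + a₁₂v₀`, `v = a₂₁u₀ + a₂₂v₀`
one has `[u,v] = [u₀,v₀]` iff `A* K A = K` with `K = [[0,1],[1,0]]`; and every pair with
`[u,v] = [u₀,v₀]` arises this way. -/
theorem stmt9 (n : ℕ) (u₀ v₀ : Fin n → ℂ)
    (hli : LinearIndependent ℂ ![u₀, v₀])
    (hT : (symOuter u₀ v₀).IsHermitian)
    (hpos : posCount hT = 1) (hneg : negCount hT = 1) :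
    (∀ A : Matrix (Fin 2) (Fin 2) ℂ,
        symOuter (A 0 0 • u₀ + A 0 1 • v₀) (A 1 0 • u₀ + A 1 1 • v₀) = symOuter u₀ v₀
          ↔ Aᴴ * !![(0 : ℂ), 1; 1, 0] * A = !![(0 : ℂ), 1; 1, 0])
    ∧ (∀ u v : Fin n → ℂ, symOuter u v = symOuter u₀ v₀ →
        ∃ A : Matrix (Fin 2) (Fin 2) ℂ,
          Aᴴ * !![(0 : ℂ), 1; 1, 0] * A = !![(0 : ℂ), 1; 1, 0] ∧
          u = A 0 0 • u₀ + A 0 1 • v₀ ∧ v = A 1 0 • u₀ + A 1 1 • v₀) := by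
  have part1 : ∀ A : Matrix (Fin 2) (Fin 2) ℂ,
      symOuter (A 0 0 • u₀ + A 0 1 • v₀) (A 1 0 • u₀ + A 1 1 • v₀) = symOuter u₀ v₀
        ↔ Aᴴ * !![(0 : ℂ), 1; 1, 0] * A = !![(0 : ℂ), 1; 1, 0] := by
    intro A
    rw [part1core hli, hK_iff]
    constructor
    · rintro ⟨e1, e2, e3, e4⟩
      refine ⟨?_, ?_, ?_, ?_⟩
      · have h' := congrArg (starRingEnd ℂ) e1
        simp only [_root_.map_add, _root_.map_mul, map_zero, _root_.map_one, Complex.conj_conj] at h'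
        linear_combination h'
      · have h' := congrArg (starRingEnd ℂ) e2
        simp only [_root_.map_add, _root_.map_mul, map_zero, _root_.map_one, Complex.conj_conj] at h'
        linear_combination h'
      · have h' := congrArg (starRingEnd ℂ) e3
        simp only [_root_.map_add, _root_.map_mul, map_zero, _root_.map_one, Complex.conj_conj] at h'
        linear_combination h'
      · have h' := congrArg (starRingEnd ℂ) e4
        simp only [_root_.map_add, _root_.map_mul, map_zero, _root_.map_one, Complex.conj_conj] at h'
        linear_combination h'
    · rintro ⟨e1, e2, e3, e4⟩
      refine ⟨?_, ?_, ?_, ?_⟩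
      · have h' := congrArg (starRingEnd ℂ) e1
        simp only [_root_.map_add, _root_.map_mul, map_zero, _root_.map_one, Complex.conj_conj] at h'
        linear_combination h'
      · have h' := congrArg (starRingEnd ℂ) e2
        simp only [_root_.map_add, _root_.map_mul, map_zero, _root_.map_one, Complex.conj_conj] at h'
        linear_combination h'
      · have h' := congrArg (starRingEnd ℂ) e3
        simp only [_root_.map_add, _root_.map_mul, map_zero, _root_.map_one, Complex.conj_conj] at h'
        linear_combination h'
      · have h' := congrArg (starRingEnd ℂ) e4
        simp only [_root_.map_add, _root_.map_mul, map_zero, _root_.map_one, Complex.conj_conj] at h'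
        linear_combination h'
  refine ⟨part1, ?_⟩
  intro u v h
  have pair := fun a b => (LinearIndependent.pair_iff.mp hli) a b
  have hli' : LinearIndependent ℂ ![fun i => conj (u₀ i), fun i => conj (v₀ i)] := by
    rw [LinearIndependent.pair_iff]
    intro s t hst
    have h0 : conj s • u₀ + conj t • v₀ = 0 := by
      funext i
      have e' := congrArg (starRingEnd ℂ) (congrFun hst i)
      simp only [Pi.add_apply, Pi.smul_apply, Pi.zero_apply, smul_eq_mul, map_add,
        _root_.map_mul, map_zero, Complex.conj_conj] at e' ⊢
      linear_combination e'
    obtain ⟨hs, ht⟩ := pair _ _ h0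
    constructor
    · simpa using congrArg (starRingEnd ℂ) hs
    · simpa using congrArg (starRingEnd ℂ) ht
  obtain ⟨φ, ψ, hφu, hφv, hψu, hψv⟩ :=
    exists_dual (fun i => conj (u₀ i)) (fun i => conj (v₀ i)) hli'
  have colsum : ∀ w : Fin n → ℂ,
      (∑ j, w j * conj (v j)) • u + (∑ j, w j * conj (u j)) • v
        = (∑ j, w j * conj (v₀ j)) • u₀ + (∑ j, w j * conj (u₀ j)) • v₀ := by
    intro w
    have L : ∀ x y : Fin n → ℂ, ∀ i : Fin n,
        ((∑ j, w j * conj (y j)) • x + (∑ j, w j * conj (x j)) • y) i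
          = ∑ j, w j * (x i * conj (y j) + y i * conj (x j)) := by
      intro x y i
      simp only [Pi.add_apply, Pi.smul_apply, smul_eq_mul, Finset.sum_mul]
      rw [← Finset.sum_add_distrib]
      exact Finset.sum_congr rfl fun j _ => by ring
    funext i
    rw [L u v i, L u₀ v₀ i]
    refine Finset.sum_congr rfl fun j _ => ?_
    have e := congrFun (congrFun h i) j
    simp only [symOuter, outer, Matrix.add_apply, Matrix.smul_apply, vecMulVec_apply,
      Pi.star_apply, Complex.star_def, smul_eq_mul] at e
    linear_combination 2 * w j * e
  have pairing : ∀ (g : (Fin n → ℂ) →ₗ[ℂ] ℂ) (x : Fin n → ℂ),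
      (∑ j, (g fun k => if j = k then 1 else 0) * conj (x j)) = g (fun i => conj (x i)) := by
    intro g x
    rw [LinearMap.pi_apply_eq_sum_univ g (fun i => conj (x i))]
    exact Finset.sum_congr rfl fun j _ => by rw [smul_eq_mul]; ring
  have hu₀ : u₀ ∈ Submodule.span ℂ ({u, v} : Set (Fin n → ℂ)) := by
    refine Submodule.mem_span_pair.mpr
      ⟨∑ j, (ψ fun k => if j = k then 1 else 0) * conj (v j),
       ∑ j, (ψ fun k => if j = k then 1 else 0) * conj (u j), ?_⟩
    rw [colsum (fun j => ψ fun k => if j = k then 1 else 0), pairing ψ u₀, pairing ψ v₀,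
      hψu, hψv]
    simp
  have hv₀ : v₀ ∈ Submodule.span ℂ ({u, v} : Set (Fin n → ℂ)) := by
    refine Submodule.mem_span_pair.mpr
      ⟨∑ j, (φ fun k => if j = k then 1 else 0) * conj (v j),
       ∑ j, (φ fun k => if j = k then 1 else 0) * conj (u j), ?_⟩
    rw [colsum (fun j => φ fun k => if j = k then 1 else 0), pairing φ u₀, pairing φ v₀,
      hφu, hφv]
    simp
  have hsub : Submodule.span ℂ ({u₀, v₀} : Set (Fin n → ℂ))
      ≤ Submodule.span ℂ ({u, v} : Set (Fin n → ℂ)) := by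
    rw [Submodule.span_le]
    rintro z hz
    rcases hz with rfl | rfl
    · exact hu₀
    · exact hv₀
  have hrange : Set.range ![u₀, v₀] = ({u₀, v₀} : Set (Fin n → ℂ)) := by
    rw [show (({u₀, v₀} : Set (Fin n → ℂ))) = {v₀, u₀} from Set.pair_comm _ _]
    simp [Matrix.range_cons, Matrix.range_cons_empty]
  have fr1 : Module.finrank ℂ (Submodule.span ℂ ({u₀, v₀} : Set (Fin n → ℂ))) = 2 := by
    rw [← hrange]
    simpa using finrank_span_eq_card hli
  have fr2 : Module.finrank ℂ (Submodule.span ℂ ({u, v} : Set (Fin n → ℂ))) ≤ 2 := by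
    classical
    refine le_trans (finrank_span_le_card _) ?_
    rw [Set.toFinset_insert, Set.toFinset_singleton]
    exact le_trans (Finset.card_insert_le _ _) (by simp)
  have heq := Submodule.eq_of_le_of_finrank_le hsub (by rw [fr1]; exact fr2)
  have hu : u ∈ Submodule.span ℂ ({u₀, v₀} : Set (Fin n → ℂ)) := by
    rw [heq]; exact Submodule.subset_span (Set.mem_insert _ _)
  have hv : v ∈ Submodule.span ℂ ({u₀, v₀} : Set (Fin n → ℂ)) := by
    rw [heq]; exact Submodule.subset_span (Set.mem_insert_of_mem _ rfl)
  obtain ⟨a, b, hab⟩ := Submodule.mem_span_pair.mp hu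
  obtain ⟨c, d, hcd⟩ := Submodule.mem_span_pair.mp hv
  refine ⟨!![a, b; c, d], ?_, ?_, ?_⟩
  · have hA : symOuter ((!![a, b; c, d] : Matrix (Fin 2) (Fin 2) ℂ) 0 0 • u₀
        + !![a, b; c, d] 0 1 • v₀)
        (!![a, b; c, d] 1 0 • u₀ + !![a, b; c, d] 1 1 • v₀) = symOuter u₀ v₀ := by
      simp only [Matrix.cons_val', Matrix.cons_val_zero, Matrix.cons_val_one, Matrix.head_cons,
        Matrix.empty_val', Matrix.cons_val_fin_one, Matrix.of_apply, Matrix.head_fin_const]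
      rw [hab, hcd]; exact h
    exact (part1 _).mp hA
  · simp only [Matrix.cons_val', Matrix.cons_val_zero, Matrix.cons_val_one, Matrix.head_cons,
      Matrix.empty_val', Matrix.cons_val_fin_one, Matrix.of_apply, Matrix.head_fin_const]
    exact hab.symm
  · simp only [Matrix.cons_val', Matrix.cons_val_zero, Matrix.cons_val_one, Matrix.head_cons,
      Matrix.empty_val', Matrix.cons_val_fin_one, Matrix.of_apply, Matrix.head_fin_const]
    exact hcd.symm
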